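/- Let U₁, …, U_H be independent real random variables on a probability space (Ω, ℙ), each with distribution gaussianReal 0 1, let b₀ ∈ ℝ^J, let B₂ be a J × H real matrix, and let B₁ be a J × J real matrix with (B₁)ᵢⱼ = 0 whenever j ≥ i (so that 1 − B₁ is invertible). Define V = (1 − B₁)⁻¹ *ᵥ (b₀ + B₂ *ᵥ U). Then the cross-covariance between the observed and background variables satisfies E[(Vᵢ − E[Vᵢ]) · U_h] = ((1 − B₁)⁻¹ · B₂)ᵢ_h for every i ∈ Fin J and h ∈ Fin H. -/

import Mathlib

open MeasureTheory ProbabilityTheory Matrix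
open Real Set
open scoped ENNReal NNReal

noncomputable section CCaux

lemma cc_rpow_two (y : ℝ) : y ^ (2:ℝ) = y ^ 2 := by
  rw [show (2:ℝ) = ((2:ℕ):ℝ) by norm_num, Real.rpow_natCast]

lemma cc_pdf_eq (x : ℝ) :
    gaussianPDFReal 0 1 x = (√(2 * π))⁻¹ * rexp (-(1/2) * x ^ 2) := by
  rw [gaussianPDFReal]
  simp only [NNReal.coe_one, mul_one, sub_zero]
  congr 1
  ring_nf

lemma cc_gaussian_withDensity :
    gaussianReal 0 1
      = volume.withDensity (fun x => ((gaussianPDFReal 0 1 x).toNNReal : ℝ≥0∞)) := by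
  rw [gaussianReal_of_var_ne_zero _ one_ne_zero]
  rfl

lemma cc_integral_gaussian (g : ℝ → ℝ) :
    ∫ x, g x ∂(gaussianReal 0 1) = ∫ x, gaussianPDFReal 0 1 x * g x := by
  rw [cc_gaussian_withDensity,
    integral_withDensity_eq_integral_smul
      ((measurable_gaussianPDFReal 0 1).real_toNNReal) g]
  congr 1
  ext x
  simp [NNReal.smul_def, Real.coe_toNNReal _ (gaussianPDFReal_nonneg 0 1 x)]

lemma cc_integrable_gaussian_iff (g : ℝ → ℝ) :
    Integrable g (gaussianReal 0 1)
      ↔ Integrable (fun x => gaussianPDFReal 0 1 x * g x) volume := by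
  rw [cc_gaussian_withDensity,
    integrable_withDensity_iff_integrable_smul
      ((measurable_gaussianPDFReal 0 1).real_toNNReal)]
  constructor <;> intro hg <;> refine hg.congr (Filter.Eventually.of_forall fun x => ?_) <;>
    simp [NNReal.smul_def, Real.coe_toNNReal _ (gaussianPDFReal_nonneg 0 1 x)]

lemma cc_integrable_id : Integrable (id : ℝ → ℝ) (gaussianReal 0 1) := by
  rw [cc_integrable_gaussian_iff]
  have h := (integrable_mul_exp_neg_mul_sq (b := 1/2) (by norm_num)).const_mul (√(2 * π))⁻¹
  refine h.congr (Filter.Eventually.of_forall fun x => ?_)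
  simp only [cc_pdf_eq, id]
  ring

lemma cc_integral_id : ∫ x, x ∂(gaussianReal 0 1) = 0 := by
  rw [cc_integral_gaussian]
  have hodd : ∫ x : ℝ, gaussianPDFReal 0 1 x * x = - ∫ x : ℝ, gaussianPDFReal 0 1 x * x := by
    conv_lhs => rw [← integral_neg_eq_self (fun x => gaussianPDFReal 0 1 x * x) volume]
    rw [← integral_neg]
    congr 1
    ext x
    simp only [cc_pdf_eq]
    ring_nf
  linarith

lemma cc_integrable_sq : Integrable (fun x : ℝ => x ^ 2) (gaussianReal 0 1) := by
  rw [cc_integrable_gaussian_iff]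
  have h := (integrable_rpow_mul_exp_neg_mul_sq (b := 1/2) (by norm_num) (s := 2)
    (by norm_num)).const_mul (√(2 * π))⁻¹
  refine h.congr (Filter.Eventually.of_forall fun x => ?_)
  simp only [cc_pdf_eq, cc_rpow_two]
  ring

lemma cc_integral_sq_exp : ∫ x : ℝ, x ^ 2 * rexp (-(1/2) * x ^ 2) = √(2 * π) := by
  have hint : Integrable (fun x : ℝ => x ^ 2 * rexp (-(1/2) * x ^ 2)) volume := by
    have h := integrable_rpow_mul_exp_neg_mul_sq (b := 1/2) (by norm_num) (s := 2) (by norm_num)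
    refine h.congr (Filter.Eventually.of_forall fun x => ?_)
    simp only [cc_rpow_two]
  have hIoi : ∫ x in Ioi (0:ℝ), x ^ 2 * rexp (-(1/2) * x ^ 2) = √2 * √π / 2 := by
    have h := integral_rpow_mul_exp_neg_mul_rpow (p := 2) (q := 2) (b := 1/2)
      (by norm_num) (by norm_num) (by norm_num)
    simp only [cc_rpow_two] at h
    rw [h]
    have hG : Real.Gamma ((2 + 1) / 2) = √π / 2 := by
      rw [show ((2:ℝ) + 1)/2 = 1/2 + 1 by norm_num, Real.Gamma_add_one (by norm_num),
        Real.Gamma_one_half_eq]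
      ring
    have hb : ((1:ℝ)/2) ^ (-((2:ℝ) + 1) / 2) = 2 * √2 := by
      rw [one_div, ← Real.rpow_neg_one 2, ← Real.rpow_mul (by norm_num : (0:ℝ) ≤ 2),
        show (-1 : ℝ) * (-((2:ℝ) + 1) / 2) = 1 + 1/2 by norm_num,
        Real.rpow_add (by norm_num), Real.rpow_one, ← Real.sqrt_eq_rpow]
    rw [hG, hb]
    ring
  have hIic : ∫ x in Iic (0:ℝ), x ^ 2 * rexp (-(1/2) * x ^ 2) = √2 * √π / 2 := by
    rw [← hIoi, ← show -(0:ℝ) = 0 by norm_num,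
      ← integral_comp_neg_Ioi 0 (fun x => x ^ 2 * rexp (-(1/2) * x ^ 2))]
    norm_num
  rw [← intervalIntegral.integral_Iic_add_Ioi (b := 0) hint.integrableOn hint.integrableOn,
    hIoi, hIic, Real.sqrt_mul (by norm_num)]
  ring

lemma cc_integral_sq : ∫ x, x ^ 2 ∂(gaussianReal 0 1) = 1 := by
  rw [cc_integral_gaussian]
  have : ∫ x : ℝ, gaussianPDFReal 0 1 x * x ^ 2
      = (√(2 * π))⁻¹ * ∫ x : ℝ, x ^ 2 * rexp (-(1/2) * x ^ 2) := by
    rw [← integral_const_mul]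
    congr 1; ext x
    simp only [cc_pdf_eq]; ring
  rw [this, cc_integral_sq_exp, inv_mul_cancel₀]
  positivity

end CCaux

/-- **Cross-covariance block `Σ_VU = (I − B₁)⁻¹ B₂` (Online Appendix 2).**
For the linear Gaussian SCM `V = (1 − B₁)⁻¹ *ᵥ (b₀ + B₂ *ᵥ U)` with mutually
independent standard normal background variables `U` and strictly triangular `B₁`,
the cross-covariance between observed and background variables satisfies
`E[(Vᵢ − E[Vᵢ]) · U_h] = ((1 − B₁)⁻¹ · B₂)ᵢₕ`. -/
theorem cross_covariance_linear_gaussian_scm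
    {Ω : Type*} [MeasurableSpace Ω] (P : Measure Ω) [IsProbabilityMeasure P]
    {J H : ℕ} (U : Fin H → Ω → ℝ) (hU_meas : ∀ h, Measurable (U h))
    (hU_indep : iIndepFun U P)
    (hU_law : ∀ h, P.map (U h) = gaussianReal 0 1)
    (b₀ : Fin J → ℝ) (B₂ : Matrix (Fin J) (Fin H) ℝ)
    (B₁ : Matrix (Fin J) (Fin J) ℝ)
    (htri : ∀ i j : Fin J, i ≤ j → B₁ i j = 0)
    (V : Ω → Fin J → ℝ)
    (hV : ∀ ω, V ω = (1 - B₁)⁻¹ *ᵥ (b₀ + B₂ *ᵥ fun h => U h ω)) :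
    ∀ (i : Fin J) (h : Fin H),
      (∫ ω, (V ω i - ∫ ω', V ω' i ∂P) * U h ω ∂P) = ((1 - B₁)⁻¹ * B₂) i h := by
  intro i h
  set A := (1 - B₁)⁻¹ with hA
  set C := A * B₂ with hC
  -- basic integrability and moments of the U's
  have intU : ∀ k, Integrable (U k) P := by
    intro k
    have : Integrable (id : ℝ → ℝ) (P.map (U k)) := by rw [hU_law k]; exact cc_integrable_id
    rw [integrable_map_measure aestronglyMeasurable_id (hU_meas k).aemeasurable] at this
    exact this
  have hEU : ∀ k, ∫ ω, U k ω ∂P = 0 := by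
    intro k
    have h1 : ∫ x, x ∂(P.map (U k)) = ∫ ω, U k ω ∂P :=
      integral_map (hU_meas k).aemeasurable aestronglyMeasurable_id
    rw [← h1, hU_law k, cc_integral_id]
  have intUsq : ∀ k, Integrable (fun ω => U k ω * U k ω) P := by
    intro k
    have : Integrable (fun x : ℝ => x ^ 2) (P.map (U k)) := by
      rw [hU_law k]; exact cc_integrable_sq
    rw [integrable_map_measure (by fun_prop) (hU_meas k).aemeasurable] at this
    exact this.congr (Filter.Eventually.of_forall fun ω => by simp [Function.comp, sq])
  have intUU : ∀ k k', Integrable (fun ω => U k ω * U k' ω) P := by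
    intro k k'
    rcases eq_or_ne k k' with rfl | hkk'
    · exact intUsq k
    · exact (hU_indep.indepFun hkk').integrable_mul (intU k) (intU k')
  have hEUU : ∀ k k', ∫ ω, U k ω * U k' ω ∂P = if k = k' then 1 else 0 := by
    intro k k'
    rcases eq_or_ne k k' with rfl | hkk'
    · rw [if_pos rfl]
      have h2 : ∫ x, x ^ 2 ∂(P.map (U k)) = ∫ ω, U k ω ^ 2 ∂P :=
        integral_map (hU_meas k).aemeasurable (by fun_prop)
      have h3 : (fun ω => U k ω * U k ω) = fun ω => U k ω ^ 2 := by ext ω; ring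
      rw [h3, ← h2, hU_law k, cc_integral_sq]
    · rw [if_neg hkk']
      have h4 := (hU_indep.indepFun hkk').integral_mul_eq_mul_integral (intU k).aestronglyMeasurable
        (intU k').aestronglyMeasurable
      rw [hEU k, hEU k', mul_zero] at h4
      exact h4
  -- decomposition of V i
  have hVi : ∀ ω, V ω i = (A *ᵥ b₀) i + ∑ k, C i k * U k ω := by
    intro ω
    rw [hV ω, Matrix.mulVec_add, Matrix.mulVec_mulVec]
    simp [Matrix.mulVec, dotProduct, hC]
  have hint_sum : Integrable (fun ω => ∑ k, C i k * U k ω) P :=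
    integrable_finset_sum _ (fun k _ => (intU k).const_mul _)
  have hEVi : ∫ ω, V ω i ∂P = (A *ᵥ b₀) i := by
    simp_rw [hVi]
    rw [integral_add (integrable_const _) hint_sum, integral_const, probReal_univ,
      one_smul, integral_finset_sum _ (fun k _ => (intU k).const_mul _)]
    simp [integral_const_mul, hEU]
  have hshift : ∀ ω, (V ω i - ∫ ω', V ω' i ∂P) * U h ω = ∑ k, C i k * (U k ω * U h ω) := by
    intro ω
    rw [hVi ω, hEVi, add_sub_cancel_left, Finset.sum_mul]
    exact Finset.sum_congr rfl fun k _ => by ring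
  calc ∫ ω, (V ω i - ∫ ω', V ω' i ∂P) * U h ω ∂P
      = ∫ ω, ∑ k, C i k * (U k ω * U h ω) ∂P := by simp_rw [hshift]
    _ = ∑ k, C i k * ∫ ω, U k ω * U h ω ∂P := by
        rw [integral_finset_sum _ (fun k _ => (intUU k h).const_mul _)]
        exact Finset.sum_congr rfl fun k _ => integral_const_mul _ _
    _ = C i h := by
        rw [Finset.sum_eq_single h]
        · rw [hEUU h h, if_pos rfl, mul_one]
        · intro k _ hk; rw [hEUU k h, if_neg hk, mul_zero]
        · intro hh; exact absurd (Finset.mem_univ h) hh
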